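/- For every integer m ≥ 1, every T > 0, every generator Q ∈ ℝ^{m×m}, every bounded measurable function r : [0,T] × {1,…,m} → ℝ, and every continuous function P : [0,T] × {1,…,m} → (0,∞), the H-system associated with (r, Q, P) has exactly one solution H : [0,T] × {1,…,m} → ℝ. -/

import Mathlib

open MeasureTheory Filter
open scoped BigOperators Topology

/-- `Q` is the generator matrix of a continuous-time Markov chain:
off-diagonal entries are nonnegative and each row sums to zero. -/
def IsGenerator {S : Type*} [Fintype S] (Q : Matrix S S ℝ) : Prop :=
  (∀ i j, i ≠ j → 0 ≤ Q i j) ∧ ∀ i, ∑ j, Q i j = 0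

/-- `f : [0,T] × S → ℝ` is bounded and measurable (in time, for each state). -/
def BddMeasOn {S : Type*} [Fintype S] (T : ℝ) (f : ℝ → S → ℝ) : Prop :=
  (∀ i, Measurable fun t => f t i) ∧
    ∃ C : ℝ, ∀ t ∈ Set.Icc (0:ℝ) T, ∀ i, |f t i| ≤ C

/-- `P` is a solution of the P-system associated with `(ρ, r, Q)` on `[0,T]`:
`P` is continuous on `[0,T]` and
`P(t,i) = 1 - ∫_t^T [P(s,i)(ρ(s,i) - 2 r(s,i)) - Σ_j q_{ij} P(s,j)] ds`. -/
def IsPSol {S : Type*} [Fintype S] (T : ℝ) (Q : Matrix S S ℝ)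
    (ρ r : ℝ → S → ℝ) (P : ℝ → S → ℝ) : Prop :=
  (∀ i, ContinuousOn (fun t => P t i) (Set.Icc 0 T)) ∧
    ∀ t ∈ Set.Icc (0:ℝ) T, ∀ i,
      P t i = 1 - ∫ s in t..T, (P s i * (ρ s i - 2 * r s i) - ∑ j, Q i j * P s j)

/-- `H` is a solution of the H-system associated with `(r, Q, P)` on `[0,T]`:
`H` is continuous on `[0,T]` and
`H(t,i) = 1 - ∫_t^T [H(s,i) r(s,i) - (1/P(s,i)) Σ_j q_{ij} P(s,j) H(s,j)
  + (H(s,i)/P(s,i)) Σ_j q_{ij} P(s,j)] ds`. -/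
def IsHSol {S : Type*} [Fintype S] (T : ℝ) (Q : Matrix S S ℝ)
    (r : ℝ → S → ℝ) (P : ℝ → S → ℝ) (H : ℝ → S → ℝ) : Prop :=
  (∀ i, ContinuousOn (fun t => H t i) (Set.Icc 0 T)) ∧
    ∀ t ∈ Set.Icc (0:ℝ) T, ∀ i,
      H t i = 1 - ∫ s in t..T,
        (H s i * r s i - (1 / P s i) * ∑ j, Q i j * P s j * H s j
          + (H s i / P s i) * ∑ j, Q i j * P s j)

set_option maxHeartbeats 1000000 in
/-- For every `m ≥ 1`, `T > 0`, generator `Q`, bounded measurable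
`r`, and continuous `P : [0,T] × {1,…,m} → (0,∞)`, the H-system associated with
`(r, Q, P)` has exactly one solution on `[0,T]`. -/
theorem h_system_exists_unique (m : ℕ) (hm : 1 ≤ m) (T : ℝ) (hT : 0 < T)
    (Q : Matrix (Fin m) (Fin m) ℝ) (hQ : IsGenerator Q)
    (r : ℝ → Fin m → ℝ) (hr : BddMeasOn T r)
    (P : ℝ → Fin m → ℝ)
    (hPc : ∀ i, ContinuousOn (fun t => P t i) (Set.Icc 0 T))
    (hPpos : ∀ t ∈ Set.Icc (0:ℝ) T, ∀ i, 0 < P t i) :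
    ∃ H : ℝ → Fin m → ℝ, IsHSol T Q r P H ∧
      ∀ H' : ℝ → Fin m → ℝ, IsHSol T Q r P H' →
        ∀ t ∈ Set.Icc (0:ℝ) T, ∀ i, H' t i = H t i := by
  classical
  have hT0 : (0:ℝ) ≤ T := hT.le
  have hne : Nonempty (Fin m) := ⟨⟨0, hm⟩⟩
  obtain ⟨hrm, Cr, hCr⟩ := hr
  have hCr0 : 0 ≤ Cr := le_trans (abs_nonneg _) (hCr 0 ⟨le_refl _, hT0⟩ ⟨0, hm⟩)
  -- the clipping map
  set c : ℝ → ℝ := fun s => min (max s 0) T with hcdef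
  have hcmem : ∀ s, c s ∈ Set.Icc (0:ℝ) T := fun s =>
    ⟨le_min (le_max_right _ _) hT0, min_le_right _ _⟩
  have hceq : ∀ s ∈ Set.Icc (0:ℝ) T, c s = s := by
    intro s hs
    simp only [hcdef]
    rw [max_eq_left hs.1, min_eq_left hs.2]
  have hc_cont : Continuous c := (continuous_id.max continuous_const).min continuous_const
  have hc_meas : Measurable c := hc_cont.measurable
  -- clipped coefficients
  set P' : ℝ → Fin m → ℝ := fun s i => P (c s) i with hP'def
  set r' : ℝ → Fin m → ℝ := fun s i => r (c s) i with hr'def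
  have hP'c : ∀ i, Continuous fun s => P' s i := fun i =>
    (hPc i).comp_continuous hc_cont hcmem
  have hr'm : ∀ i, Measurable fun s => r' s i := fun i => (hrm i).comp hc_meas
  have hr'bd : ∀ s i, |r' s i| ≤ Cr := fun s i => hCr _ (hcmem s) i
  -- lower bound on P
  obtain ⟨ε, hε0, hεle⟩ : ∃ ε > 0, ∀ s ∈ Set.Icc (0:ℝ) T, ∀ i, ε ≤ P s i := by
    have h1 : ∀ i : Fin m, ∃ t₀ ∈ Set.Icc (0:ℝ) T, ∀ s ∈ Set.Icc (0:ℝ) T,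
        P t₀ i ≤ P s i := by
      intro i
      obtain ⟨t₀, ht₀, hmin⟩ := isCompact_Icc.exists_isMinOn
        (Set.nonempty_Icc.2 hT0) (hPc i)
      exact ⟨t₀, ht₀, fun s hs => hmin hs⟩
    choose τ hτmem hτ using h1
    refine ⟨Finset.univ.inf' Finset.univ_nonempty (fun i => P (τ i) i), ?_, ?_⟩
    · rw [gt_iff_lt, Finset.lt_inf'_iff]
      exact fun i _ => hPpos _ (hτmem i) i
    · intro s hs i
      exact le_trans (Finset.inf'_le _ (Finset.mem_univ i)) (hτ i s hs)
  have hP'lb : ∀ s i, ε ≤ P' s i := fun s i => hεle _ (hcmem s) i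
  have hP'pos : ∀ s i, 0 < P' s i := fun s i => lt_of_lt_of_le hε0 (hP'lb s i)
  -- upper bound on P
  obtain ⟨M, hM0, hMbd⟩ : ∃ M, 0 ≤ M ∧ ∀ s ∈ Set.Icc (0:ℝ) T, ∀ i, |P s i| ≤ M := by
    have h1 : ∀ i : Fin m, ∃ Mi, ∀ s ∈ Set.Icc (0:ℝ) T, |P s i| ≤ Mi := by
      intro i
      obtain ⟨Mi, hMi⟩ := isCompact_Icc.exists_bound_of_continuousOn (hPc i)
      exact ⟨Mi, fun s hs => hMi s hs⟩
    choose Mi hMi using h1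
    refine ⟨max 0 (Finset.univ.sup' Finset.univ_nonempty Mi), le_max_left _ _,
      fun s hs i => le_trans (hMi i s hs) (le_trans ?_ (le_max_right _ _))⟩
    exact Finset.le_sup' _ (Finset.mem_univ i)
  have hP'bd : ∀ s i, |P' s i| ≤ M := fun s i => hMbd _ (hcmem s) i
  -- bound on Q
  set Qb : ℝ := ∑ i, ∑ j, |Q i j| with hQbdef
  have hQb0 : 0 ≤ Qb := Finset.sum_nonneg fun i _ =>
    Finset.sum_nonneg fun j _ => abs_nonneg _
  have hQbrow : ∀ i : Fin m, ∑ j, |Q i j| ≤ Qb :=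
    fun i => Finset.single_le_sum (f := fun i' => ∑ j, |Q i' j|)
      (fun i' _ => Finset.sum_nonneg fun j _ => abs_nonneg _) (Finset.mem_univ i)
  -- Lipschitz constant
  set L : ℝ := Cr + 2 * ((Qb * M) / ε) with hLdef
  have hL0 : 0 ≤ L := by positivity
  -- the vector field
  set F : ℝ → (Fin m → ℝ) → Fin m → ℝ := fun s v i =>
    v i * r' s i - (1 / P' s i) * ∑ j, Q i j * P' s j * v j
      + (v i / P' s i) * ∑ j, Q i j * P' s j with hFdef
  -- bound on the weighted sums
  have hsum : ∀ (s : ℝ) (u : Fin m → ℝ) (i : Fin m),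
      |∑ j, Q i j * P' s j * u j| ≤ Qb * M * ‖u‖ := by
    intro s u i
    calc |∑ j, Q i j * P' s j * u j| ≤ ∑ j, |Q i j * P' s j * u j| :=
          Finset.abs_sum_le_sum_abs _ _
      _ ≤ ∑ j, |Q i j| * (M * ‖u‖) := by
          refine Finset.sum_le_sum fun j _ => ?_
          rw [abs_mul, abs_mul, mul_assoc]
          exact mul_le_mul_of_nonneg_left
            (mul_le_mul (hP'bd s j) (norm_le_pi_norm u j) (abs_nonneg _) hM0)
            (abs_nonneg _)
      _ = (∑ j, |Q i j|) * (M * ‖u‖) := by rw [Finset.sum_mul]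
      _ ≤ Qb * (M * ‖u‖) := by
          refine mul_le_mul_of_nonneg_right (hQbrow i) ?_
          positivity
      _ = Qb * M * ‖u‖ := by ring
  have hsum1 : ∀ (s : ℝ) (i : Fin m), |∑ j, Q i j * P' s j| ≤ Qb * M := by
    intro s i
    calc |∑ j, Q i j * P' s j| ≤ ∑ j, |Q i j * P' s j| := Finset.abs_sum_le_sum_abs _ _
      _ ≤ ∑ j, |Q i j| * M := by
          refine Finset.sum_le_sum fun j _ => ?_
          rw [abs_mul]
          exact mul_le_mul le_rfl (hP'bd s j) (abs_nonneg _) (abs_nonneg _)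
      _ = (∑ j, |Q i j|) * M := by rw [Finset.sum_mul]
      _ ≤ Qb * M := mul_le_mul_of_nonneg_right (hQbrow i) hM0
  -- Lipschitz property of F
  have hFlip : ∀ (s : ℝ) (v w : Fin m → ℝ) (i : Fin m),
      |F s v i - F s w i| ≤ L * ‖v - w‖ := by
    intro s v w i
    have hS : ∑ j, Q i j * P' s j * (v j - w j)
        = (∑ j, Q i j * P' s j * v j) - ∑ j, Q i j * P' s j * w j := by
      rw [← Finset.sum_sub_distrib]
      exact Finset.sum_congr rfl fun j _ => by ring
    have hEq : F s v i - F s w i =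
        (v i - w i) * r' s i - (1 / P' s i) * ∑ j, Q i j * P' s j * (v j - w j)
          + ((v i - w i) / P' s i) * ∑ j, Q i j * P' s j := by
      simp only [hFdef]
      rw [hS]
      ring
    rw [hEq]
    have hui : |v i - w i| ≤ ‖v - w‖ := by
      have := norm_le_pi_norm (v - w) i
      simpa using this
    have h1 : |(v i - w i) * r' s i| ≤ ‖v - w‖ * Cr := by
      rw [abs_mul]
      exact mul_le_mul hui (hr'bd s i) (abs_nonneg _) (norm_nonneg _)
    have hPinv : |1 / P' s i| ≤ 1 / ε := by
      rw [abs_of_pos (one_div_pos.2 (hP'pos s i))]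
      exact one_div_le_one_div_of_le hε0 (hP'lb s i)
    have h2 : |(1 / P' s i) * ∑ j, Q i j * P' s j * (v j - w j)|
        ≤ (1 / ε) * (Qb * M * ‖v - w‖) := by
      rw [abs_mul]
      have := hsum s (v - w) i
      simp only [Pi.sub_apply] at this
      exact mul_le_mul hPinv this (abs_nonneg _) (by positivity)
    have h3 : |((v i - w i) / P' s i) * ∑ j, Q i j * P' s j|
        ≤ (‖v - w‖ * (1 / ε)) * (Qb * M) := by
      rw [abs_mul, abs_div, abs_of_pos (hP'pos s i)]
      refine mul_le_mul ?_ (hsum1 s i) (abs_nonneg _)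
        (mul_nonneg (norm_nonneg _) (by positivity))
      rw [div_eq_mul_one_div]
      exact mul_le_mul hui (one_div_le_one_div_of_le hε0 (hP'lb s i))
        (div_nonneg zero_le_one (hP'pos s i).le) (norm_nonneg _)
    calc |(v i - w i) * r' s i - (1 / P' s i) * (∑ j, Q i j * P' s j * (v j - w j))
          + ((v i - w i) / P' s i) * ∑ j, Q i j * P' s j|
        ≤ |(v i - w i) * r' s i - (1 / P' s i) * ∑ j, Q i j * P' s j * (v j - w j)|
          + |((v i - w i) / P' s i) * ∑ j, Q i j * P' s j| := abs_add_le _ _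
      _ ≤ (|(v i - w i) * r' s i|
            + |(1 / P' s i) * ∑ j, Q i j * P' s j * (v j - w j)|)
          + |((v i - w i) / P' s i) * ∑ j, Q i j * P' s j| :=
          add_le_add_left (abs_sub _ _) _
      _ ≤ (‖v - w‖ * Cr + (1 / ε) * (Qb * M * ‖v - w‖))
          + (‖v - w‖ * (1 / ε)) * (Qb * M) := add_le_add (add_le_add h1 h2) h3
      _ = L * ‖v - w‖ := by
          rw [hLdef]
          field_simp
          ring
  -- the projection onto [0,T]
  set pr : ℝ → Set.Icc (0:ℝ) T := Set.projIcc 0 T hT0 with hprdef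
  have hpr_cont : Continuous pr := continuous_projIcc
  -- F(s, ·) vanishes at 0 and is bounded
  have hFle : ∀ (s : ℝ) (v : Fin m → ℝ) (i : Fin m), |F s v i| ≤ L * ‖v‖ := by
    intro s v i
    have h0 : F s (fun _ => (0:ℝ)) i = 0 := by simp [hFdef]
    have h := hFlip s v (fun _ => 0) i
    rw [h0, sub_zero] at h
    have hv : v - (fun _ => (0:ℝ)) = v := by funext j; simp
    rwa [hv] at h
  -- measurability and integrability of the integrand
  have hgm : ∀ (H : C(Set.Icc (0:ℝ) T, Fin m → ℝ)) (i : Fin m),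
      Measurable fun s => F s (H (pr s)) i := by
    intro H i
    have hH : ∀ j, Measurable fun s => H (pr s) j :=
      fun j => ((continuous_apply j).comp (H.continuous.comp hpr_cont)).measurable
    simp only [hFdef]
    refine Measurable.add (Measurable.sub ?_ ?_) ?_
    · exact (hH i).mul (hr'm i)
    · exact (measurable_const.div (hP'c i).measurable).mul
        (Finset.measurable_sum _ fun j _ =>
          (measurable_const.mul (hP'c j).measurable).mul (hH j))
    · exact ((hH i).div (hP'c i).measurable).mul
        (Finset.measurable_sum _ fun j _ => measurable_const.mul (hP'c j).measurable)
  have hgint : ∀ (H : C(Set.Icc (0:ℝ) T, Fin m → ℝ)) (i : Fin m) (a b : ℝ),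
      IntervalIntegrable (fun s => F s (H (pr s)) i) volume a b := by
    intro H i a b
    refine (intervalIntegrable_const (c := L * ‖H‖)).mono_fun
      (hgm H i).aestronglyMeasurable (Eventually.of_forall fun s => ?_)
    show ‖F s (H (pr s)) i‖ ≤ ‖L * ‖H‖‖
    rw [Real.norm_eq_abs, Real.norm_eq_abs,
      abs_of_nonneg (by positivity : (0:ℝ) ≤ L * ‖H‖)]
    exact (hFle s _ i).trans (mul_le_mul_of_nonneg_left (H.norm_coe_le_norm _) hL0)
  -- the Picard operator
  have hΦc : ∀ H : C(Set.Icc (0:ℝ) T, Fin m → ℝ),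
      Continuous fun t : Set.Icc (0:ℝ) T =>
        fun i => 1 - ∫ s in (t:ℝ)..T, F s (H (pr s)) i := by
    intro H
    refine continuous_pi fun i => Continuous.sub continuous_const ?_
    have h1 : Continuous fun b : ℝ => ∫ s in T..b, F s (H (pr s)) i :=
      intervalIntegral.continuous_primitive (fun a b => hgint H i a b) T
    have h2 : Continuous fun t : Set.Icc (0:ℝ) T =>
        -∫ s in T..(t:ℝ), F s (H (pr s)) i := (h1.comp continuous_subtype_val).neg
    have h3 : (fun t : Set.Icc (0:ℝ) T => ∫ s in (t:ℝ)..T, F s (H (pr s)) i)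
        = fun t : Set.Icc (0:ℝ) T => -∫ s in T..(t:ℝ), F s (H (pr s)) i := by
      funext t; rw [intervalIntegral.integral_symm]
    rw [h3]
    exact h2
  set Φ : C(Set.Icc (0:ℝ) T, Fin m → ℝ) → C(Set.Icc (0:ℝ) T, Fin m → ℝ) :=
    fun H => ⟨fun t => fun i => 1 - ∫ s in (t:ℝ)..T, F s (H (pr s)) i, hΦc H⟩
    with hΦdef
  have hΦapp : ∀ (H : C(Set.Icc (0:ℝ) T, Fin m → ℝ)) (t : Set.Icc (0:ℝ) T) (i : Fin m),
      Φ H t i = 1 - ∫ s in (t:ℝ)..T, F s (H (pr s)) i := fun H t i => rfl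
  -- the key iterate estimate
  have key : ∀ (n : ℕ) (G G' : C(Set.Icc (0:ℝ) T, Fin m → ℝ)) (t : Set.Icc (0:ℝ) T),
      dist ((Φ^[n]) G t) ((Φ^[n]) G' t)
        ≤ L ^ n * (T - (t:ℝ)) ^ n / n.factorial * dist G G' := by
    intro n
    induction n with
    | zero =>
      intro G G' t
      simpa using ContinuousMap.dist_apply_le_dist (f := G) (g := G') t
    | succ n ih =>
      intro G G' t
      have htT : (t:ℝ) ≤ T := t.2.2
      have ht0 : (0:ℝ) ≤ (t:ℝ) := t.2.1
      have hTt : (0:ℝ) ≤ T - (t:ℝ) := sub_nonneg.2 htT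
      set A := Φ^[n] G with hA
      set B := Φ^[n] G' with hB
      rw [Function.iterate_succ_apply', Function.iterate_succ_apply']
      have hrhs0 : (0:ℝ) ≤ L ^ (n+1) * (T - (t:ℝ)) ^ (n+1) / (n+1).factorial * dist G G' :=
        mul_nonneg (div_nonneg (mul_nonneg (pow_nonneg hL0 _) (pow_nonneg hTt _))
          (Nat.cast_nonneg _)) dist_nonneg
      rw [dist_pi_le_iff hrhs0]
      intro i
      rw [Real.dist_eq, hΦapp, hΦapp]
      have hsub : (1 - ∫ s in (t:ℝ)..T, F s (A (pr s)) i)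
            - (1 - ∫ s in (t:ℝ)..T, F s (B (pr s)) i)
          = ∫ s in (t:ℝ)..T, (F s (B (pr s)) i - F s (A (pr s)) i) := by
        rw [intervalIntegral.integral_sub (hgint B i _ _) (hgint A i _ _)]
        generalize (∫ (s : ℝ) in (t:ℝ)..T, F s (A (pr s)) i) = a
        generalize (∫ (s : ℝ) in (t:ℝ)..T, F s (B (pr s)) i) = b
        ring
      rw [hsub]
      have hboundInt : IntervalIntegrable
          (fun s => L * (L ^ n * (T - s) ^ n / n.factorial * dist G G'))
          volume (t:ℝ) T := by
        apply Continuous.intervalIntegrable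
        fun_prop
      have hae : ∀ᵐ s ∂(volume.restrict (Set.uIoc (t:ℝ) T)),
          ‖F s (B (pr s)) i - F s (A (pr s)) i‖
            ≤ L * (L ^ n * (T - s) ^ n / n.factorial * dist G G') := by
        refine (ae_restrict_mem measurableSet_uIoc).mono fun s hs => ?_
        rw [Set.uIoc_of_le htT] at hs
        have hsmem : s ∈ Set.Icc (0:ℝ) T := ⟨ht0.trans hs.1.le, hs.2⟩
        have hprs : pr s = ⟨s, hsmem⟩ := Set.projIcc_of_mem hT0 hsmem
        rw [Real.norm_eq_abs]
        calc |F s (B (pr s)) i - F s (A (pr s)) i|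
            ≤ L * ‖B (pr s) - A (pr s)‖ := hFlip _ _ _ _
          _ ≤ L * (L ^ n * (T - s) ^ n / n.factorial * dist G G') := by
              refine mul_le_mul_of_nonneg_left ?_ hL0
              rw [hprs, ← dist_eq_norm, dist_comm]
              exact ih G G' ⟨s, hsmem⟩
      have h1 := intervalIntegral.norm_integral_le_abs_of_norm_le hae hboundInt
      rw [Real.norm_eq_abs] at h1
      refine h1.trans ?_
      have hintexp : (fun s : ℝ => L * (L ^ n * (T - s) ^ n / n.factorial * dist G G'))
          = fun s : ℝ => (L ^ (n+1) * dist G G' / n.factorial) * (T - s) ^ n := by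
        funext s; ring
      have hcomp : (∫ s in (t:ℝ)..T, (T - s) ^ n) = (T - (t:ℝ)) ^ (n+1) / (n+1) := by
        rw [intervalIntegral.integral_comp_sub_left (fun x => x ^ n) T]
        simp [integral_pow]
      rw [hintexp, intervalIntegral.integral_const_mul, hcomp]
      have hnn : (0:ℝ) ≤ L ^ (n+1) * dist G G' / n.factorial
          * ((T - (t:ℝ)) ^ (n+1) / (n+1)) :=
        mul_nonneg (div_nonneg (mul_nonneg (pow_nonneg hL0 _) dist_nonneg)
          (Nat.cast_nonneg _)) (div_nonneg (pow_nonneg hTt _) (by positivity))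
      rw [abs_of_nonneg hnn]
      apply le_of_eq
      have hfac : (((n+1).factorial : ℕ) : ℝ) = ((n:ℝ)+1) * (n.factorial : ℝ) := by
        rw [Nat.factorial_succ]; push_cast; ring
      have hne1 : ((n.factorial : ℕ) : ℝ) ≠ 0 := Nat.cast_ne_zero.2 n.factorial_ne_zero
      have hne2 : ((n:ℝ) + 1) ≠ 0 := by positivity
      rw [hfac]
      field_simp
  -- choose n making the iterate a contraction
  obtain ⟨n, hn⟩ : ∃ n : ℕ, (L * T) ^ n / n.factorial < 1 :=
    ((FloorSemiring.tendsto_pow_div_factorial_atTop (K := ℝ) (L * T)).eventually_lt_const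
      one_pos).exists
  have hKc0 : (0:ℝ) ≤ (L * T) ^ n / n.factorial := by positivity
  set Kc : NNReal := ⟨(L * T) ^ n / n.factorial, hKc0⟩ with hKcdef
  have hcontr : ContractingWith Kc (Φ^[n]) := by
    constructor
    · exact_mod_cast hn
    · refine LipschitzWith.of_dist_le_mul fun G G' => ?_
      have h0 : (0:ℝ) ≤ (Kc : ℝ) * dist G G' := mul_nonneg Kc.2 dist_nonneg
      rw [ContinuousMap.dist_le h0]
      intro t
      refine (key n G G' t).trans ?_
      have hTt : (0:ℝ) ≤ T - (t:ℝ) := sub_nonneg.2 t.2.2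
      have h1 : (T - (t:ℝ)) ^ n ≤ T ^ n :=
        pow_le_pow_left₀ hTt (by linarith [t.2.1]) n
      have h2 : L ^ n * (T - (t:ℝ)) ^ n / n.factorial ≤ (L * T) ^ n / n.factorial := by
        rw [mul_pow]
        refine div_le_div_of_nonneg_right ?_ ?_ |>.trans_eq rfl
        · exact mul_le_mul_of_nonneg_left h1 (pow_nonneg hL0 _)
        · positivity
      exact mul_le_mul_of_nonneg_right h2 dist_nonneg
  set x : C(Set.Icc (0:ℝ) T, Fin m → ℝ) :=
    ContractingWith.fixedPoint (Φ^[n]) hcontr with hxdef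
  have hxfix : Φ^[n] x = x := hcontr.fixedPoint_isFixedPt
  have hΦxfix : Function.IsFixedPt (Φ^[n]) (Φ x) := by
    show Φ^[n] (Φ x) = Φ x
    rw [← Function.iterate_succ_apply, Function.iterate_succ_apply', hxfix]
  have hx : Φ x = x := by
    rw [hcontr.fixedPoint_unique hΦxfix]
  -- the solution
  refine ⟨fun t i => x (pr t) i, ⟨?_, ?_⟩, ?_⟩
  · intro i
    exact ((continuous_apply i).comp (x.continuous.comp hpr_cont)).continuousOn
  · intro t ht i
    show x (pr t) i = _
    have hprt : pr t = ⟨t, ht⟩ := Set.projIcc_of_mem hT0 ht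
    have hfx : x (⟨t, ht⟩ : Set.Icc (0:ℝ) T) i
        = 1 - ∫ s in t..T, F s (x (pr s)) i := by
      conv_lhs => rw [← hx]
      exact hΦapp x ⟨t, ht⟩ i
    rw [hprt, hfx]
    congr 1
    refine intervalIntegral.integral_congr fun s hs => ?_
    rw [Set.uIcc_of_le ht.2] at hs
    have hsmem : s ∈ Set.Icc (0:ℝ) T := ⟨ht.1.trans hs.1, hs.2⟩
    simp only [hFdef, hr'def, hP'def, hceq s hsmem]
  · intro H' hH' t ht i
    have hycont : Continuous fun u : Set.Icc (0:ℝ) T => fun j => H' (u:ℝ) j :=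
      continuous_pi fun j => (hH'.1 j).restrict
    set y : C(Set.Icc (0:ℝ) T, Fin m → ℝ) := ⟨fun u => fun j => H' (u:ℝ) j, hycont⟩
      with hydef
    have hyfix : Function.IsFixedPt Φ y := by
      refine ContinuousMap.ext fun u => funext fun j => ?_
      have hu : (u:ℝ) ∈ Set.Icc (0:ℝ) T := u.2
      have hstep : Φ y u j = 1 - ∫ s in (u:ℝ)..T,
          (H' s j * r s j - (1 / P s j) * ∑ j', Q j j' * P s j' * H' s j'
            + (H' s j / P s j) * ∑ j', Q j j' * P s j') := by
        rw [hΦapp]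
        congr 1
        refine intervalIntegral.integral_congr fun s hs => ?_
        rw [Set.uIcc_of_le hu.2] at hs
        have hsmem : s ∈ Set.Icc (0:ℝ) T := ⟨hu.1.trans hs.1, hs.2⟩
        have hprs : pr s = ⟨s, hsmem⟩ := Set.projIcc_of_mem hT0 hsmem
        simp only [hFdef, hr'def, hP'def, hceq s hsmem, hprs, hydef,
          ContinuousMap.coe_mk]
      rw [hstep, ← hH'.2 (u:ℝ) hu j]
      rfl
    have hy : y = x := hcontr.fixedPoint_unique (hyfix.iterate n)
    have h1 : H' t i = y ⟨t, ht⟩ i := rfl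
    have hprt : pr t = ⟨t, ht⟩ := Set.projIcc_of_mem hT0 ht
    show H' t i = x (pr t) i
    rw [h1, hy, hprt]
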